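/- Let (g,⟨·,·⟩,D,θ) be an extrinsic symmetric triple such that the Lie algebra g is semisimple. Then the triple is automatically full, i.e. [g₊⁻, g₋⁻] = g₋⁺. -/

import Mathlib

/-- The span of all brackets of elements of two submodules of a Lie algebra. -/
def bracketSpan {g : Type*} [LieRing g] [LieAlgebra ℝ g] (s t : Submodule ℝ g) :
    Submodule ℝ g :=
  Submodule.span ℝ {z | ∃ x ∈ s, ∃ y ∈ t, z = ⁅x, y⁆}

/-- An extrinsic symmetric triple whose Lie algebra is semisimple is automatically full:
[g₊⁻, g₋⁻] = g₋⁺. -/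
theorem stmt6 {g : Type*} [LieRing g] [LieAlgebra ℝ g] [Module.Finite ℝ g]
    [LieAlgebra.IsSemisimple ℝ g]
    (B : LinearMap.BilinForm ℝ g)
    (hsymm : ∀ x y, B x y = B y x)
    (hnd : B.Nondegenerate)
    (hinv : ∀ x y z : g, B ⁅x, y⁆ z + B y ⁅x, z⁆ = 0)
    (D : g →ₗ[ℝ] g)
    (hDder : ∀ x y : g, D ⁅x, y⁆ = ⁅D x, y⁆ + ⁅x, D y⁆)
    (hDskew : ∀ x y, B (D x) y = -(B x (D y)))
    (hD3 : D ∘ₗ D ∘ₗ D = -D)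
    (θ : g →ₗ[ℝ] g)
    (hθ2 : θ ∘ₗ θ = LinearMap.id)
    (hθlie : ∀ x y : g, θ ⁅x, y⁆ = ⁅θ x, θ y⁆)
    (hθiso : ∀ x y, B (θ x) (θ y) = B x y)
    (hDθ : D ∘ₗ θ = -(θ ∘ₗ D))
    (hext : bracketSpan
        (LinearMap.ker (θ - LinearMap.id) ⊓ LinearMap.ker (D ∘ₗ D + LinearMap.id))
        (LinearMap.ker (θ - LinearMap.id) ⊓ LinearMap.ker (D ∘ₗ D + LinearMap.id)) =
        LinearMap.ker (θ - LinearMap.id) ⊓ LinearMap.ker D) :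
    bracketSpan
        (LinearMap.ker (θ - LinearMap.id) ⊓ LinearMap.ker (D ∘ₗ D + LinearMap.id))
        (LinearMap.ker (θ + LinearMap.id) ⊓ LinearMap.ker (D ∘ₗ D + LinearMap.id)) =
      LinearMap.ker (θ + LinearMap.id) ⊓ LinearMap.ker D := by
  classical
  set P := LinearMap.ker (θ - LinearMap.id) with hPdef
  set N := LinearMap.ker (θ + LinearMap.id) with hNdef
  set K := LinearMap.ker D with hKdef
  set I := LinearMap.ker (D ∘ₗ D + LinearMap.id) with hIdef
  -- pointwise versions of the hypotheses
  have hθθ : ∀ x : g, θ (θ x) = x := fun x => by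
    simpa using LinearMap.congr_fun hθ2 x
  have hD3' : ∀ x : g, D (D (D x)) = -(D x) := fun x => by
    simpa using LinearMap.congr_fun hD3 x
  have hDθ' : ∀ x : g, D (θ x) = -θ (D x) := fun x => by
    simpa using LinearMap.congr_fun hDθ x
  have hθD2 : ∀ x : g, θ (D (D x)) = D (D (θ x)) := fun x => by
    rw [hDθ' x, map_neg, hDθ' (D x), neg_neg]
  -- membership characterizations
  have hPm : ∀ x : g, x ∈ P ↔ θ x = x := fun x => by
    simp [hPdef, LinearMap.mem_ker, LinearMap.sub_apply, sub_eq_zero]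
  have hNm : ∀ x : g, x ∈ N ↔ θ x = -x := fun x => by
    simp [hNdef, LinearMap.mem_ker, LinearMap.add_apply, add_eq_zero_iff_eq_neg]
  have hKm : ∀ x : g, x ∈ K ↔ D x = 0 := fun x => LinearMap.mem_ker
  have hIm : ∀ x : g, x ∈ I ↔ D (D x) = -x := fun x => by
    simp [hIdef, LinearMap.mem_ker, LinearMap.add_apply, LinearMap.comp_apply,
      add_eq_zero_iff_eq_neg]
  -- bracket relations
  have brPP : ∀ x y : g, x ∈ P → y ∈ P → ⁅x, y⁆ ∈ P := by
    intro x y hx hy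
    rw [hPm, hθlie, (hPm x).1 hx, (hPm y).1 hy]
  have brPN : ∀ x y : g, x ∈ P → y ∈ N → ⁅x, y⁆ ∈ N := by
    intro x y hx hy
    rw [hNm, hθlie, (hPm x).1 hx, (hNm y).1 hy, lie_neg]
  have brNP : ∀ x y : g, x ∈ N → y ∈ P → ⁅x, y⁆ ∈ N := by
    intro x y hx hy
    rw [hNm, hθlie, (hNm x).1 hx, (hPm y).1 hy, neg_lie]
  have brNN : ∀ x y : g, x ∈ N → y ∈ N → ⁅x, y⁆ ∈ P := by
    intro x y hx hy
    rw [hPm, hθlie, (hNm x).1 hx, (hNm y).1 hy, neg_lie, lie_neg, neg_neg]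
  have brKK : ∀ x y : g, x ∈ K → y ∈ K → ⁅x, y⁆ ∈ K := by
    intro x y hx hy
    rw [hKm, hDder, (hKm x).1 hx, (hKm y).1 hy, zero_lie, lie_zero, add_zero]
  have brKI : ∀ x y : g, x ∈ K → y ∈ I → ⁅x, y⁆ ∈ I := by
    intro x y hx hy
    rw [hKm] at hx
    rw [hIm] at hy ⊢
    rw [hDder, hx, zero_lie, zero_add, hDder, hx, zero_lie, zero_add, hy, lie_neg]
  have brIK : ∀ x y : g, x ∈ I → y ∈ K → ⁅x, y⁆ ∈ I := by
    intro x y hx hy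
    rw [hKm] at hy
    rw [hIm] at hx ⊢
    rw [hDder, hy, lie_zero, add_zero, hDder, hy, lie_zero, add_zero, hx, neg_lie]
  have brII : ∀ x y : g, x ∈ I → y ∈ I → ⁅x, y⁆ ∈ K := by
    intro x y hx hy
    rw [hIm] at hx hy
    rw [hKm]
    -- compute D³⁅x,y⁆ two ways
    have e1 : D ⁅x, y⁆ = ⁅D x, y⁆ + ⁅x, D y⁆ := hDder x y
    have e2 : D (D ⁅x, y⁆) = (⁅D x, D y⁆ + ⁅D x, D y⁆) - (⁅x, y⁆ + ⁅x, y⁆) := by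
      rw [e1, map_add, hDder, hDder, hx, hy, neg_lie, lie_neg]
      abel
    have e4 : D ⁅D x, D y⁆ = -(D ⁅x, y⁆) := by
      rw [hDder, hx, hy, neg_lie, lie_neg, e1]
      abel
    have e5 : D (D (D ⁅x, y⁆)) = -(D ⁅x, y⁆ + D ⁅x, y⁆ + D ⁅x, y⁆ + D ⁅x, y⁆) := by
      rw [e2, map_sub, map_add, map_add, e4, e1]
      abel
    have e6 : D (D (D ⁅x, y⁆)) = -(D ⁅x, y⁆) := hD3' _
    have e7 : D ⁅x, y⁆ + D ⁅x, y⁆ + D ⁅x, y⁆ = 0 := by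
      have h := e5.symm.trans e6
      have h' := neg_injective h
      -- h' : D ⁅x,y⁆ + D ⁅x,y⁆ + D ⁅x,y⁆ + D ⁅x,y⁆ = D ⁅x,y⁆
      have := sub_eq_zero_of_eq h'
      rw [← this]
      abel
    have e8 : (3 : ℝ) • D ⁅x, y⁆ = 0 := by
      rw [show (3 : ℝ) = 1 + 1 + 1 by norm_num, add_smul, add_smul, one_smul]
      simpa using e7
    have := smul_eq_zero.mp e8
    simpa using this
  -- orthogonality relations
  have orthPN : ∀ x y : g, x ∈ P → y ∈ N → B x y = 0 := by
    intro x y hx hy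
    have h := hθiso x y
    rw [(hPm x).1 hx, (hNm y).1 hy, map_neg] at h
    linarith
  have orthKI : ∀ x y : g, x ∈ K → y ∈ I → B x y = 0 := by
    intro x y hx hy
    have h := hDskew x (D y)
    rw [(hKm x).1 hx, (hIm y).1 hy, map_neg, neg_neg] at h
    simpa using h.symm
  -- symmetric versions
  have orthNP : ∀ x y : g, x ∈ N → y ∈ P → B x y = 0 := fun x y hx hy => by
    rw [hsymm]; exact orthPN y x hy hx
  have orthIK : ∀ x y : g, x ∈ I → y ∈ K → B x y = 0 := fun x y hx hy => by
    rw [hsymm]; exact orthKI y x hy hx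
  -- decomposition into the four pieces
  have projK : ∀ u : g, u + D (D u) ∈ K := by
    intro u
    rw [hKm, map_add, hD3']
    abel
  have projI : ∀ u : g, -(D (D u)) ∈ I := by
    intro u
    rw [hIm]
    simp only [map_neg, neg_neg]
    rw [hD3' (D u), neg_neg]
  have projP : ∀ u : g, ((1 : ℝ)/2) • (u + θ u) ∈ P := by
    intro u
    rw [hPm, map_smul, map_add, hθθ]
    rw [add_comm (θ u) u]
  have projN : ∀ u : g, ((1 : ℝ)/2) • (u - θ u) ∈ N := by
    intro u
    rw [hNm, map_smul, map_sub, hθθ, ← smul_neg, neg_sub]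
  have hPD2 : ∀ u : g, u ∈ P → D (D u) ∈ P := by
    intro u hu
    rw [hPm, hθD2, (hPm u).1 hu]
  have hND2 : ∀ u : g, u ∈ N → D (D u) ∈ N := by
    intro u hu
    rw [hNm, hθD2, (hNm u).1 hu, map_neg, map_neg]
  have decompD : ∀ (X : Submodule ℝ g), (∀ u : g, u ∈ X → D (D u) ∈ X) →
      ∀ u ∈ X, ∃ a b : g, a ∈ X ⊓ K ∧ b ∈ X ⊓ I ∧ u = a + b := by
    intro X hX u hu
    refine ⟨u + D (D u), -(D (D u)), Submodule.mem_inf.mpr ⟨X.add_mem hu (hX u hu), projK u⟩,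
      Submodule.mem_inf.mpr ⟨X.neg_mem (hX u hu), projI u⟩, by abel⟩
  have decomp4 : ∀ u : g, ∃ a b c d : g,
      a ∈ P ⊓ K ∧ b ∈ P ⊓ I ∧ c ∈ N ⊓ K ∧ d ∈ N ⊓ I ∧ u = a + b + c + d := by
    intro u
    obtain ⟨a, b, ha, hb, hab⟩ := decompD P hPD2 _ (projP u)
    obtain ⟨c, d, hc, hd, hcd⟩ := decompD N hND2 _ (projN u)
    refine ⟨a, b, c, d, ha, hb, hc, hd, ?_⟩
    have : u = ((1 : ℝ)/2) • (u + θ u) + ((1 : ℝ)/2) • (u - θ u) := by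
      module
    rw [this, hab, hcd]
    abel
  -- nondegeneracy on each of the four pieces
  have nondegOn : ∀ X : Submodule ℝ g,
      (∀ w v : g, w ∈ X → (v ∈ P ⊓ K ∨ v ∈ P ⊓ I ∨ v ∈ N ⊓ K ∨ v ∈ N ⊓ I) →
        v ∈ X ∨ B w v = 0) →
      ∀ w ∈ X, (∀ u ∈ X, B w u = 0) → w = 0 := by
    intro X hX w hw hw0
    apply hnd.1 w
    intro u
    obtain ⟨a, b, c, d, ha, hb, hc, hd, rfl⟩ := decomp4 u
    have fa : B w a = 0 := (hX w a hw (Or.inl ha)).elim (hw0 a) id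
    have fb : B w b = 0 := (hX w b hw (Or.inr (Or.inl hb))).elim (hw0 b) id
    have fc : B w c = 0 := (hX w c hw (Or.inr (Or.inr (Or.inl hc)))).elim (hw0 c) id
    have fd : B w d = 0 := (hX w d hw (Or.inr (Or.inr (Or.inr hd)))).elim (hw0 d) id
    simp [map_add, fa, fb, fc, fd]
  have nondegPK : ∀ w : g, w ∈ P ⊓ K → (∀ u ∈ P ⊓ K, B w u = 0) → w = 0 := by
    refine nondegOn (P ⊓ K) ?_
    rintro w v hw (hv | hv | hv | hv)
    · exact Or.inl hv
    · exact Or.inr (orthKI w v (Submodule.mem_inf.mp hw).2 (Submodule.mem_inf.mp hv).2)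
    · exact Or.inr (orthPN w v (Submodule.mem_inf.mp hw).1 (Submodule.mem_inf.mp hv).1)
    · exact Or.inr (orthPN w v (Submodule.mem_inf.mp hw).1 (Submodule.mem_inf.mp hv).1)
  have nondegPI : ∀ w : g, w ∈ P ⊓ I → (∀ u ∈ P ⊓ I, B w u = 0) → w = 0 := by
    refine nondegOn (P ⊓ I) ?_
    rintro w v hw (hv | hv | hv | hv)
    · exact Or.inr (orthIK w v (Submodule.mem_inf.mp hw).2 (Submodule.mem_inf.mp hv).2)
    · exact Or.inl hv
    · exact Or.inr (orthPN w v (Submodule.mem_inf.mp hw).1 (Submodule.mem_inf.mp hv).1)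
    · exact Or.inr (orthPN w v (Submodule.mem_inf.mp hw).1 (Submodule.mem_inf.mp hv).1)
  have nondegNK : ∀ w : g, w ∈ N ⊓ K → (∀ u ∈ N ⊓ K, B w u = 0) → w = 0 := by
    refine nondegOn (N ⊓ K) ?_
    rintro w v hw (hv | hv | hv | hv)
    · exact Or.inr (orthNP w v (Submodule.mem_inf.mp hw).1 (Submodule.mem_inf.mp hv).1)
    · exact Or.inr (orthNP w v (Submodule.mem_inf.mp hw).1 (Submodule.mem_inf.mp hv).1)
    · exact Or.inl hv
    · exact Or.inr (orthKI w v (Submodule.mem_inf.mp hw).2 (Submodule.mem_inf.mp hv).2)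
  have nondegNI : ∀ w : g, w ∈ N ⊓ I → (∀ u ∈ N ⊓ I, B w u = 0) → w = 0 := by
    refine nondegOn (N ⊓ I) ?_
    rintro w v hw (hv | hv | hv | hv)
    · exact Or.inr (orthNP w v (Submodule.mem_inf.mp hw).1 (Submodule.mem_inf.mp hv).1)
    · exact Or.inr (orthNP w v (Submodule.mem_inf.mp hw).1 (Submodule.mem_inf.mp hv).1)
    · exact Or.inr (orthIK w v (Submodule.mem_inf.mp hw).2 (Submodule.mem_inf.mp hv).2)
    · exact Or.inl hv
  -- B ⁅z,x⁆ y = B z ⁅x,y⁆ and B ⁅z,x⁆ y = -(B x ⁅z,y⁆)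
  have adinv : ∀ z x y : g, B ⁅z, x⁆ y = B z ⁅x, y⁆ := by
    intro z x y
    have h := hinv x z y
    have : ⁅z, x⁆ = -⁅x, z⁆ := by rw [← lie_skew x z, neg_neg]
    rw [this, map_neg, LinearMap.neg_apply]
    linarith
  have adinv2 : ∀ z x y : g, B ⁅z, x⁆ y = -(B x ⁅z, y⁆) := by
    intro z x y
    have h := hinv z x y
    linarith
  -- the bracket span is contained in N ⊓ K
  have hmle : bracketSpan (P ⊓ I) (N ⊓ I) ≤ N ⊓ K := by
    refine Submodule.span_le.mpr ?_
    rintro z ⟨x, hx, y, hy, rfl⟩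
    exact Submodule.mem_inf.mpr
      ⟨brPN x y (Submodule.mem_inf.mp hx).1 (Submodule.mem_inf.mp hy).1,
       brII x y (Submodule.mem_inf.mp hx).2 (Submodule.mem_inf.mp hy).2⟩
  -- key step: any element of N ⊓ K orthogonal to the bracket span is central, hence zero
  have key : ∀ z : g, z ∈ N ⊓ K →
      (∀ u ∈ bracketSpan (P ⊓ I) (N ⊓ I), B z u = 0) → z = 0 := by
    intro z hz hzperp
    have hzN : z ∈ N := (Submodule.mem_inf.mp hz).1
    have hzK : z ∈ K := (Submodule.mem_inf.mp hz).2
    -- Step 1: z commutes with P ⊓ I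
    have step1 : ∀ x ∈ P ⊓ I, ⁅z, x⁆ = 0 := by
      intro x hx
      have hmem : ⁅z, x⁆ ∈ N ⊓ I := Submodule.mem_inf.mpr
        ⟨brNP z x hzN (Submodule.mem_inf.mp hx).1,
         brKI z x hzK (Submodule.mem_inf.mp hx).2⟩
      refine nondegNI _ hmem ?_
      intro y hy
      rw [adinv]
      exact hzperp _ (Submodule.subset_span ⟨x, hx, y, hy, rfl⟩)
    -- Step 2: z commutes with P ⊓ K, via hext
    have step2 : ∀ x ∈ P ⊓ K, ⁅z, x⁆ = 0 := by
      intro x hx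
      rw [← hext] at hx
      induction hx using Submodule.span_induction with
      | mem w hw =>
        obtain ⟨a, ha, b, hb, rfl⟩ := hw
        rw [leibniz_lie, step1 a ha, step1 b hb, zero_lie, lie_zero, add_zero]
      | zero => exact lie_zero z
      | add a b _ _ ha hb => rw [lie_add, ha, hb, add_zero]
      | smul r a _ ha => rw [lie_smul, ha, smul_zero]
    -- z commutes with all of P
    have stepP : ∀ x ∈ P, ⁅z, x⁆ = 0 := by
      intro x hx
      obtain ⟨a, b, ha, hb, rfl⟩ := decompD P hPD2 x hx
      rw [lie_add, step2 a ha, step1 b hb, add_zero]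
    -- z commutes with N ⊓ I
    have step3 : ∀ x ∈ N ⊓ I, ⁅z, x⁆ = 0 := by
      intro x hx
      have hmem : ⁅z, x⁆ ∈ P ⊓ I := Submodule.mem_inf.mpr
        ⟨brNN z x hzN (Submodule.mem_inf.mp hx).1,
         brKI z x hzK (Submodule.mem_inf.mp hx).2⟩
      refine nondegPI _ hmem ?_
      intro y hy
      rw [adinv2, stepP y (Submodule.mem_inf.mp hy).1, map_zero, neg_zero]
    -- z commutes with N ⊓ K
    have step4 : ∀ x ∈ N ⊓ K, ⁅z, x⁆ = 0 := by
      intro x hx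
      have hmem : ⁅z, x⁆ ∈ P ⊓ K := Submodule.mem_inf.mpr
        ⟨brNN z x hzN (Submodule.mem_inf.mp hx).1,
         brKK z x hzK (Submodule.mem_inf.mp hx).2⟩
      refine nondegPK _ hmem ?_
      intro y hy
      rw [adinv2, stepP y (Submodule.mem_inf.mp hy).1, map_zero, neg_zero]
    -- z is central
    have hcentral : ∀ x : g, ⁅z, x⁆ = 0 := by
      intro x
      obtain ⟨a, b, c, d, ha, hb, hc, hd, rfl⟩ := decomp4 x
      have hainf := Submodule.mem_inf.mp ha
      have hbinf := Submodule.mem_inf.mp hb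
      rw [lie_add, lie_add, lie_add, stepP a hainf.1, stepP b hbinf.1, step4 c hc, step3 d hd]
      simp
    have hzc : z ∈ LieAlgebra.center ℝ g := by
      rw [LieModule.mem_maxTrivSubmodule]
      intro x
      rw [← lie_skew, hcentral x, neg_zero]
    rw [LieAlgebra.center_eq_bot ℝ g] at hzc
    exact hzc
  -- conclude by a dimension count
  refine le_antisymm hmle ?_
  set V := N ⊓ K with hVdef
  set m' : Submodule ℝ V := (bracketSpan (P ⊓ I) (N ⊓ I)).comap V.subtype with hm'def
  set B' : LinearMap.BilinForm ℝ V := B.restrict V with hB'def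
  have hB'refl : B'.IsRefl := by
    intro x y h
    simp only [hB'def, LinearMap.BilinForm.restrict_apply, LinearMap.domRestrict_apply] at h ⊢
    rw [hsymm]
    exact h
  have hB'nd : B'.Nondegenerate := by
    have hL : B'.SeparatingLeft := by
      intro w hw
      have : (w : g) = 0 := by
        refine nondegNK w w.2 ?_
        intro u hu
        simpa [hB'def, LinearMap.BilinForm.restrict_apply, LinearMap.domRestrict_apply] using hw ⟨u, hu⟩
      exact Subtype.ext this
    exact ⟨hL, fun w hw => hL w (fun u => hB'refl _ _ (hw u))⟩
  have horth : B'.orthogonal m' = ⊥ := by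
    rw [eq_bot_iff]
    intro w hw
    rw [Submodule.mem_bot]
    have hperp : ∀ u ∈ bracketSpan (P ⊓ I) (N ⊓ I), B (w : g) u = 0 := by
      intro u hu
      have h := hw ⟨u, hmle hu⟩ (by simpa [hm'def] using hu)
      simp only [hB'def, LinearMap.BilinForm.restrict_apply, LinearMap.domRestrict_apply] at h
      rw [hsymm]
      exact h
    exact Subtype.ext (key w w.2 hperp)
  have hfr := LinearMap.BilinForm.finrank_add_finrank_orthogonal hB'refl m'
  rw [horth, B'.orthogonal_top_eq_bot hB'nd, inf_bot_eq, finrank_bot, add_zero, add_zero] at hfr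
  have htop : m' = ⊤ := Submodule.eq_top_of_finrank_eq hfr
  exact Submodule.comap_subtype_eq_top.mp htop
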